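/- arXiv:1212.1381 — 4 statements merged into one kernel-verified Lean document; each statement's English description precedes it below -/
import Mathlib

section
/- Let Φ : [0,1] → ℝ be nonnegative, nondecreasing, with Φ(0) = 0, and suppose that for some δ ∈ (0,1) the integral ∫₀¹ v^{−2−δ} Φ(v) dv is finite. Then there exists a constant K₁ > 0 such that Φ(s) ≤ K₁ s^{1+δ} for all s ∈ [0,1]. -/
open MeasureTheory

theorem Phi_power_bound (Φ : ℝ → ℝ) (δ : ℝ) (hδ : δ ∈ Set.Ioo (0:ℝ) 1)
    (hnonneg : ∀ s ∈ Set.Icc (0:ℝ) 1, 0 ≤ Φ s)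
    (hmono : MonotoneOn Φ (Set.Icc (0:ℝ) 1)) (h0 : Φ 0 = 0)
    (hint : IntegrableOn (fun v => v ^ (-2 - δ) * Φ v) (Set.Ioo (0:ℝ) 1) volume) :
    ∃ K > 0, ∀ s ∈ Set.Icc (0:ℝ) 1, Φ s ≤ K * s ^ (1 + δ) := by
  obtain ⟨hδ0, hδ1⟩ := hδ
  have h1δ : (0:ℝ) < 1 + δ := by linarith
  set I := ∫ v in Set.Ioo (0:ℝ) 1, v ^ (-2 - δ) * Φ v with hIdef
  have hI0 : 0 ≤ I :=
    setIntegral_nonneg measurableSet_Ioo (fun v hv =>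
      mul_nonneg (Real.rpow_nonneg hv.1.le _) (hnonneg v ⟨hv.1.le, hv.2.le⟩))
  have hΦ1 : 0 ≤ Φ 1 := hnonneg 1 ⟨zero_le_one, le_rfl⟩
  -- key inequality for 0 < s < 1
  have key : ∀ s : ℝ, 0 < s → s < 1 →
      Φ s * ((s ^ (-(1 + δ)) - 1) / (1 + δ)) ≤ I := by
    intro s hs0 hs1
    have hmem : s ∈ Set.Icc (0:ℝ) 1 := ⟨hs0.le, hs1.le⟩
    have hΦs : 0 ≤ Φ s := hnonneg s hmem
    -- integrability of v ^ (-2-δ) on Ioo s 1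
    have hii : IntervalIntegrable (fun v : ℝ => v ^ (-2 - δ)) volume s 1 := by
      apply intervalIntegral.intervalIntegrable_rpow
      right
      intro h
      have := (Set.mem_uIcc.mp h)
      rcases this with ⟨h1, _⟩ | ⟨_, h2⟩ <;> linarith
    have hion : IntegrableOn (fun v : ℝ => v ^ (-2 - δ)) (Set.Ioo s 1) volume :=
      (hii.1.mono_set Set.Ioo_subset_Ioc_self)
    have h1 : ∫ v in Set.Ioo s 1, Φ s * v ^ (-2 - δ) ≤
        ∫ v in Set.Ioo s 1, v ^ (-2 - δ) * Φ v := by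
      apply setIntegral_mono_on (hion.const_mul _)
        (hint.mono_set (Set.Ioo_subset_Ioo hs0.le le_rfl)) measurableSet_Ioo
      intro v hv
      rw [mul_comm (v ^ (-2 - δ))]
      have hΦ : Φ s ≤ Φ v := hmono hmem ⟨(hs0.trans hv.1).le, hv.2.le⟩ hv.1.le
      have : (0:ℝ) ≤ v ^ (-2 - δ) := Real.rpow_nonneg (hs0.trans hv.1).le _
      exact mul_le_mul_of_nonneg_right hΦ this
    have h2 : ∫ v in Set.Ioo s 1, v ^ (-2 - δ) * Φ v ≤ I := by
      apply setIntegral_mono_set hint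
      · filter_upwards [ae_restrict_mem measurableSet_Ioo] with v hv
        exact mul_nonneg (Real.rpow_nonneg hv.1.le _) (hnonneg v ⟨hv.1.le, hv.2.le⟩)
      · exact HasSubset.Subset.eventuallyLE (Set.Ioo_subset_Ioo hs0.le le_rfl)
    have hcomp : ∫ v in Set.Ioo s 1, v ^ (-2 - δ) = (s ^ (-(1 + δ)) - 1) / (1 + δ) := by
      rw [← integral_Ioc_eq_integral_Ioo, ← intervalIntegral.integral_of_le hs1.le]
      rw [integral_rpow]
      · have h2δ : -2 - δ + 1 = -(1 + δ) := by ring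
        rw [h2δ, Real.one_rpow]
        generalize s ^ (-(1 + δ)) = A
        have hx : (-1 - δ) * (-1 - δ)⁻¹ = 1 := mul_inv_cancel₀ (by linarith)
        rw [div_neg, neg_div', neg_sub]
      · right
        constructor
        · intro h; linarith
        · intro h
          rcases Set.mem_uIcc.mp h with ⟨h1, _⟩ | ⟨_, h2⟩ <;> linarith
    calc Φ s * ((s ^ (-(1 + δ)) - 1) / (1 + δ))
        = ∫ v in Set.Ioo s 1, Φ s * v ^ (-2 - δ) := by
          rw [MeasureTheory.integral_const_mul, hcomp]
      _ ≤ I := h1.trans h2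
  refine ⟨max (2 * (1 + δ) * I) (4 * Φ 1) + 1, by positivity, ?_⟩
  intro s hs
  rcases eq_or_lt_of_le hs.1 with h|hs0
  · rw [← h, h0, Real.zero_rpow h1δ.ne', mul_zero]
  · have hsp : (0:ℝ) < s ^ (1 + δ) := Real.rpow_pos_of_pos hs0 _
    have hK1 : 2 * (1 + δ) * I ≤ max (2 * (1 + δ) * I) (4 * Φ 1) + 1 := by
      have := le_max_left (2 * (1 + δ) * I) (4 * Φ 1); linarith
    have hK2 : 4 * Φ 1 ≤ max (2 * (1 + δ) * I) (4 * Φ 1) + 1 := by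
      have := le_max_right (2 * (1 + δ) * I) (4 * Φ 1); linarith
    rcases le_or_gt s (1/2) with hhalf | hhalf
    · have hs1 : s < 1 := by linarith
      have hk := key s hs0 hs1
      set t := s ^ (1 + δ) with htdef
      have htneg : s ^ (-(1 + δ)) = t⁻¹ := by
        rw [Real.rpow_neg hs0.le]
      rw [htneg] at hk
      have ht1 : t ≤ 1/2 := by
        calc t ≤ (1/2 : ℝ) ^ (1 + δ) := by
              apply Real.rpow_le_rpow hs0.le hhalf (by positivity)
          _ ≤ (1/2 : ℝ) ^ (1 : ℝ) := by
              apply Real.rpow_le_rpow_of_exponent_ge (by norm_num) (by norm_num)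
              linarith
          _ = 1/2 := by norm_num
      have hΦs : 0 ≤ Φ s := hnonneg s hs
      have htt : t * t⁻¹ = 1 := mul_inv_cancel₀ hsp.ne'
      have step1 : Φ s * (t⁻¹ - 1) ≤ I * (1 + δ) := by
        have h' : Φ s * (t⁻¹ - 1) / (1 + δ) ≤ I := by rw [mul_div_assoc]; exact hk
        exact (div_le_iff₀ h1δ).mp h'
      have step2 : Φ s * (t⁻¹ - 1) * t ≤ I * (1 + δ) * t :=
        mul_le_mul_of_nonneg_right step1 hsp.le
      have heq : Φ s * (t⁻¹ - 1) * t = Φ s * (1 - t) := by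
        have ht0 : t ≠ 0 := hsp.ne'
        field_simp
      have step3 : Φ s * (1 - t) ≤ I * (1 + δ) * t := heq ▸ step2
      have h4 : Φ s * t ≤ Φ s * (1/2) := mul_le_mul_of_nonneg_left ht1 hΦs
      have hb : Φ s ≤ 2 * (1 + δ) * I * t := by nlinarith [step3, h4]
      calc Φ s ≤ 2 * (1 + δ) * I * t := hb
        _ ≤ (max (2 * (1 + δ) * I) (4 * Φ 1) + 1) * t := by
            apply mul_le_mul_of_nonneg_right hK1 hsp.le
    · have hΦs : Φ s ≤ Φ 1 := hmono hs ⟨zero_le_one, le_rfl⟩ hs.2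
      have ht4 : (1/4 : ℝ) ≤ s ^ (1 + δ) := by
        calc (1/4 : ℝ) = (1/2 : ℝ) ^ (2 : ℝ) := by
              rw [show (2:ℝ) = ((2:ℕ):ℝ) by norm_num, Real.rpow_natCast]; norm_num
          _ ≤ (1/2 : ℝ) ^ (1 + δ) := by
              apply Real.rpow_le_rpow_of_exponent_ge (by norm_num) (by norm_num)
              linarith
          _ ≤ s ^ (1 + δ) := by
              apply Real.rpow_le_rpow (by norm_num) hhalf.le (by positivity)
      calc Φ s ≤ Φ 1 := hΦs
        _ ≤ 4 * Φ 1 * s ^ (1 + δ) := by nlinarith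
        _ ≤ (max (2 * (1 + δ) * I) (4 * Φ 1) + 1) * s ^ (1 + δ) :=
            mul_le_mul_of_nonneg_right hK2 hsp.le
end

section
/- Let X be a nonnegative integer-valued random variable with E[X] < ∞ and let δ ∈ (0,1). Then E[X^{1+δ}] = (δ(1+δ)/Γ(1−δ)) · ∫₀^∞ v^{−2−δ} (E[e^{−vX}] − 1 + v·E[X]) dv, with both sides possibly infinite simultaneously; here the integrand is nonnegative for all v > 0. -/
open MeasureTheory ENNReal

open Set Real in
lemma aux_exp_ineq (y : ℝ) : 0 ≤ Real.exp (-y) - 1 + y := by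
  have := Real.add_one_le_exp (-y); linarith

open Set Real in
lemma aux_L2 {δ t : ℝ} (hδ : δ ∈ Set.Ioo (0:ℝ) 1) (ht : 0 < t) :
    ∫⁻ v in Set.Ioi t, ENNReal.ofReal (v ^ (-2 - δ) * (v - t)) =
      ENNReal.ofReal (t ^ (-δ) / (δ * (1 + δ))) := by
  obtain ⟨hδ0, hδ1⟩ := hδ
  have hi1 : IntegrableOn (fun v : ℝ => v ^ (-1 - δ)) (Ioi t) :=
    integrableOn_Ioi_rpow_of_lt (by linarith) ht
  have hi2 : IntegrableOn (fun v : ℝ => t * v ^ (-2 - δ)) (Ioi t) :=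
    (integrableOn_Ioi_rpow_of_lt (by linarith) ht).const_mul t
  have hkey : ∀ v ∈ Ioi t, v ^ (-1 - δ) - t * v ^ (-2 - δ) = v ^ (-2 - δ) * (v - t) := by
    intro v hv
    have hv0 : (0:ℝ) < v := ht.trans hv
    have h1 : v ^ (-2 - δ) * v = v ^ (-1 - δ) := by
      rw [← Real.rpow_add_one hv0.ne' (-2 - δ)]; ring_nf
    rw [mul_sub, h1]; ring
  have hsub : IntegrableOn (fun v : ℝ => v ^ (-1 - δ) - t * v ^ (-2 - δ)) (Ioi t) :=
    hi1.sub hi2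
  have hint : IntegrableOn (fun v : ℝ => v ^ (-2 - δ) * (v - t)) (Ioi t) :=
    hsub.congr_fun hkey measurableSet_Ioi
  have hval : ∫ v in Ioi t, v ^ (-2 - δ) * (v - t) = t ^ (-δ) / (δ * (1 + δ)) := by
    rw [← setIntegral_congr_fun measurableSet_Ioi hkey,
      integral_sub hi1 hi2, integral_const_mul,
      integral_Ioi_rpow_of_lt (by linarith) ht, integral_Ioi_rpow_of_lt (by linarith) ht]
    have h2 : t * (-t ^ (-2 - δ + 1) / (-2 - δ + 1)) = t ^ (-δ) / (1 + δ) := by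
      have ht2 : t * t ^ (-2 - δ + 1) = t ^ (-δ) := by
        rw [mul_comm, ← Real.rpow_add_one ht.ne' (-2 - δ + 1)]; ring_nf
      have hne : (-2 - δ + 1 : ℝ) ≠ 0 := by linarith
      have hne2 : (1 + δ : ℝ) ≠ 0 := by linarith
      field_simp
      linear_combination (-(1 + δ)) * ht2
    have h1 : -t ^ (-1 - δ + 1) / (-1 - δ + 1) = t ^ (-δ) / δ := by
      rw [show (-1 - δ + 1 : ℝ) = -δ by ring]; field_simp
    rw [h1, h2]
    field_simp
    ring
  rw [← hval, ← ofReal_integral_eq_lintegral_ofReal hint]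
  filter_upwards [self_mem_ae_restrict (measurableSet_Ioi : MeasurableSet (Ioi t))] with v hv
  have hv0 : (0:ℝ) < v := ht.trans hv
  have : (0:ℝ) ≤ v - t := by simp only [mem_Ioi] at hv; linarith
  positivity

open Set Real in
lemma aux_L3 {δ x : ℝ} (hδ : δ ∈ Set.Ioo (0:ℝ) 1) (hx : 0 < x) :
    ∫⁻ t in Set.Ioi (0:ℝ), ENNReal.ofReal (t ^ (-δ) * Real.exp (-x * t)) =
      ENNReal.ofReal (x ^ (δ - 1) * Real.Gamma (1 - δ)) := by
  obtain ⟨hδ0, hδ1⟩ := hδ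
  have hi : IntegrableOn (fun t : ℝ => t ^ (-δ) * Real.exp (-x * t)) (Ioi 0) := by
    have := integrableOn_rpow_mul_exp_neg_mul_rpow (s := -δ) (p := 1) (b := x)
      (by linarith) one_pos hx
    exact this.congr_fun (fun t ht => by simp only [Real.rpow_one]) measurableSet_Ioi
  have hval : ∫ t in Ioi (0:ℝ), t ^ (-δ) * Real.exp (-x * t) =
      x ^ (δ - 1) * Real.Gamma (1 - δ) := by
    have h := integral_rpow_mul_exp_neg_mul_rpow (p := 1) (q := -δ) (b := x)
      one_pos (by linarith) hx
    rw [show ∫ t in Ioi (0:ℝ), t ^ (-δ) * Real.exp (-x * t) =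
        ∫ t in Ioi (0:ℝ), t ^ (-δ) * Real.exp (-x * t ^ (1:ℝ)) from
      setIntegral_congr_fun measurableSet_Ioi (fun t ht => by rw [Real.rpow_one]), h]
    rw [show (-(-δ + 1) / 1 : ℝ) = δ - 1 by ring, show ((-δ + 1) / 1 : ℝ) = 1 - δ by ring]
    ring
  rw [← hval, ← ofReal_integral_eq_lintegral_ofReal hi]
  filter_upwards [self_mem_ae_restrict (measurableSet_Ioi : MeasurableSet (Ioi (0:ℝ)))] with t ht
  have ht0 : (0:ℝ) < t := ht
  positivity

open Set Real in
lemma aux_key {δ x : ℝ} (hδ : δ ∈ Set.Ioo (0:ℝ) 1) (hx : 0 ≤ x) :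
    ∫⁻ v in Set.Ioi (0:ℝ), ENNReal.ofReal (v ^ (-2 - δ) * (Real.exp (-v * x) - 1 + v * x)) =
      ENNReal.ofReal (Real.Gamma (1 - δ) / (δ * (1 + δ)) * x ^ (1 + δ)) := by
  obtain ⟨hδ0, hδ1⟩ := hδ
  rcases eq_or_lt_of_le hx with h0 | hx
  · obtain rfl := h0
    simp [Real.zero_rpow (show (1:ℝ) + δ ≠ 0 by linarith)]
  -- x > 0
  set G : ℝ → ℝ → ℝ≥0∞ := fun v t =>
    ENNReal.ofReal (v ^ (-2 - δ) * ((v - t) * (x ^ 2 * Real.exp (-x * t)))) with hG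
  -- Step A+B+C : per-slice identity
  have hslice : ∀ v ∈ Ioi (0:ℝ),
      ENNReal.ofReal (v ^ (-2 - δ) * (Real.exp (-v * x) - 1 + v * x)) =
        ∫⁻ t in Ioi (0:ℝ), G v t := by
    intro v hv
    have hv0 : (0:ℝ) < v := hv
    -- FTC
    have hftc : Real.exp (-v * x) - 1 + v * x =
        ∫ t in (0:ℝ)..v, (v - t) * (x ^ 2 * Real.exp (-x * t)) := by
      have hderiv : ∀ t ∈ Set.uIcc (0:ℝ) v,
          HasDerivAt (fun t => (1 - x * v + x * t) * Real.exp (-x * t))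
            ((v - t) * (x ^ 2 * Real.exp (-x * t))) t := by
        intro t _
        have h1 : HasDerivAt (fun t : ℝ => 1 - x * v + x * t) x t := by
          simpa using ((hasDerivAt_id t).const_mul x).const_add (1 - x * v)
        have h2 : HasDerivAt (fun t : ℝ => Real.exp (-x * t)) (Real.exp (-x * t) * (-x)) t := by
          have hl : HasDerivAt (fun t : ℝ => -x * t) (-x) t := by
            simpa using (hasDerivAt_id t).const_mul (-x)
          exact (Real.hasDerivAt_exp _).comp t hl
        have := h1.mul h2
        exact this.congr_deriv (by ring)
      have hcont : IntervalIntegrable (fun t => (v - t) * (x ^ 2 * Real.exp (-x * t)))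
          MeasureTheory.volume 0 v := by
        apply Continuous.intervalIntegrable
        continuity
      rw [intervalIntegral.integral_eq_sub_of_hasDerivAt hderiv hcont]
      simp [Real.exp_zero]
      ring_nf
    have hg_nonneg : ∀ t ∈ Ioc (0:ℝ) v, 0 ≤ (v - t) * (x ^ 2 * Real.exp (-x * t)) := by
      intro t ht
      have : (0:ℝ) ≤ v - t := by linarith [ht.2]
      positivity
    have hg_int : IntegrableOn (fun t => (v - t) * (x ^ 2 * Real.exp (-x * t))) (Ioc 0 v) := by
      apply Continuous.integrableOn_Ioc
      continuity
    have hIoc : ENNReal.ofReal (v ^ (-2 - δ) * (Real.exp (-v * x) - 1 + v * x)) =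
        ∫⁻ t in Ioc (0:ℝ) v, G v t := by
      rw [hftc, intervalIntegral.integral_of_le hv0.le,
        ENNReal.ofReal_mul (by positivity),
        ofReal_integral_eq_lintegral_ofReal hg_int
          ((ae_restrict_iff' measurableSet_Ioc).2 (Filter.Eventually.of_forall hg_nonneg)),
        ← lintegral_const_mul' _ _ ENNReal.ofReal_ne_top]
      simp only [hG, ← ENNReal.ofReal_mul (show (0:ℝ) ≤ v ^ (-2 - δ) by positivity)]
    rw [hIoc]
    -- extend Ioc to Ioi 0
    rw [← lintegral_indicator measurableSet_Ioc, ← lintegral_indicator measurableSet_Ioi]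
    congr 1
    funext t
    by_cases h1 : t ∈ Ioc (0:ℝ) v
    · rw [Set.indicator_of_mem h1, Set.indicator_of_mem (Ioc_subset_Ioi_self h1)]
    · rw [Set.indicator_of_notMem h1]
      by_cases h2 : t ∈ Ioi (0:ℝ)
      · rw [Set.indicator_of_mem h2]
        have htv : v < t := by
          simp only [mem_Ioc, not_and, not_le] at h1
          exact h1 h2
        have hle : (v - t) * (x ^ 2 * Real.exp (-x * t)) ≤ 0 :=
          mul_nonpos_of_nonpos_of_nonneg (by linarith) (by positivity)
        symm
        exact ENNReal.ofReal_of_nonpos (mul_nonpos_of_nonneg_of_nonpos (by positivity) hle)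
      · rw [Set.indicator_of_notMem h2]
  rw [setLIntegral_congr_fun measurableSet_Ioi hslice]
  -- swap
  have hGm : Measurable (Function.uncurry G) := by
    apply Measurable.ennreal_ofReal
    fun_prop
  rw [lintegral_lintegral_swap hGm.aemeasurable]
  -- compute inner v-integral for fixed t
  have htslice : ∀ t ∈ Ioi (0:ℝ),
      ∫⁻ v in Ioi (0:ℝ), G v t =
        ENNReal.ofReal (x ^ 2 / (δ * (1 + δ)) * (t ^ (-δ) * Real.exp (-x * t))) := by
    intro t ht
    have ht0 : (0:ℝ) < t := ht
    have hstep : ∫⁻ v in Ioi (0:ℝ), G v t = ∫⁻ v in Ioi t, G v t := by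
      rw [← lintegral_indicator measurableSet_Ioi, ← lintegral_indicator measurableSet_Ioi]
      congr 1
      funext v
      by_cases h1 : v ∈ Ioi t
      · rw [Set.indicator_of_mem h1,
          Set.indicator_of_mem (show v ∈ Ioi (0:ℝ) from ht0.trans h1)]
      · rw [Set.indicator_of_notMem h1]
        by_cases h2 : v ∈ Ioi (0:ℝ)
        · rw [Set.indicator_of_mem h2]
          have hv0 : (0:ℝ) < v := h2
          have hvt : v ≤ t := not_lt.mp h1
          have hle : (v - t) * (x ^ 2 * Real.exp (-x * t)) ≤ 0 :=
            mul_nonpos_of_nonpos_of_nonneg (by linarith) (by positivity)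
          exact ENNReal.ofReal_of_nonpos
            (mul_nonpos_of_nonneg_of_nonpos (by positivity) hle)
        · rw [Set.indicator_of_notMem h2]
    rw [hstep]
    have hre : ∀ v ∈ Ioi t, G v t =
        ENNReal.ofReal (x ^ 2 * Real.exp (-x * t)) * ENNReal.ofReal (v ^ (-2 - δ) * (v - t)) := by
      intro v hv
      have hv0 : (0:ℝ) < v := ht0.trans hv
      rw [hG, ← ENNReal.ofReal_mul (by positivity)]
      ring_nf
    rw [setLIntegral_congr_fun measurableSet_Ioi hre,
      lintegral_const_mul' _ _ ENNReal.ofReal_ne_top, aux_L2 ⟨hδ0, hδ1⟩ ht0,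
      ← ENNReal.ofReal_mul (by positivity)]
    congr 1
    field_simp
  rw [setLIntegral_congr_fun measurableSet_Ioi htslice]
  have hconst : ∀ t : ℝ, ENNReal.ofReal (x ^ 2 / (δ * (1 + δ)) * (t ^ (-δ) * Real.exp (-x * t))) =
      ENNReal.ofReal (x ^ 2 / (δ * (1 + δ))) * ENNReal.ofReal (t ^ (-δ) * Real.exp (-x * t)) := by
    intro t
    rw [← ENNReal.ofReal_mul (div_nonneg (by positivity) (by nlinarith))]
  simp only [hconst]
  rw [lintegral_const_mul' _ _ ENNReal.ofReal_ne_top, aux_L3 ⟨hδ0, hδ1⟩ hx,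
    ← ENNReal.ofReal_mul (by positivity)]
  congr 1
  have hxp : x ^ 2 * x ^ (δ - 1) = x ^ (1 + δ) := by
    rw [← Real.rpow_natCast x 2, ← Real.rpow_add hx]
    norm_num
    congr 1
    ring
  have hne : δ * (1 + δ) ≠ 0 := by nlinarith
  field_simp
  linear_combination hxp

theorem fractional_moment_laplace_repr {Ω : Type*} [MeasurableSpace Ω] (μ : Measure Ω)
    [IsProbabilityMeasure μ] (X : Ω → ℕ) (hX : Measurable X)
    (hint : Integrable (fun ω => (X ω : ℝ)) μ)
    (δ : ℝ) (hδ : δ ∈ Set.Ioo (0:ℝ) 1) :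
    (∀ v ∈ Set.Ioi (0:ℝ),
      0 ≤ (∫ ω, Real.exp (-v * (X ω : ℝ)) ∂μ) - 1 + v * ∫ ω, (X ω : ℝ) ∂μ) ∧
    ∫⁻ ω, ((X ω : ℝ≥0∞)) ^ (1 + δ) ∂μ =
      ENNReal.ofReal (δ * (1 + δ) / Real.Gamma (1 - δ)) *
        ∫⁻ v in Set.Ioi (0:ℝ), ENNReal.ofReal (v ^ (-2 - δ) *
          ((∫ ω, Real.exp (-v * (X ω : ℝ)) ∂μ) - 1 + v * ∫ ω, (X ω : ℝ) ∂μ)) := by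
  obtain ⟨hδ0, hδ1⟩ := hδ
  have hXr : Measurable fun ω => (X ω : ℝ) := by fun_prop
  have hexp_int : ∀ v : ℝ, 0 < v → Integrable (fun ω => Real.exp (-v * (X ω : ℝ))) μ := by
    intro v hv
    refine Integrable.mono' (integrable_const 1)
      ((hXr.const_mul (-v)).exp).aestronglyMeasurable ?_
    filter_upwards with ω
    rw [Real.norm_eq_abs, Real.abs_exp]
    apply Real.exp_le_one_iff.mpr
    have : (0:ℝ) ≤ (X ω : ℝ) := Nat.cast_nonneg _
    nlinarith
  have hf_int : ∀ v : ℝ, 0 < v →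
      Integrable (fun ω => Real.exp (-v * (X ω : ℝ)) - 1 + v * (X ω : ℝ)) μ := by
    intro v hv
    exact ((hexp_int v hv).sub (integrable_const 1)).add (hint.const_mul v)
  have hf_nonneg : ∀ (v : ℝ) (ω : Ω), 0 < v →
      0 ≤ Real.exp (-v * (X ω : ℝ)) - 1 + v * (X ω : ℝ) := by
    intro v ω hv
    have := aux_exp_ineq (v * (X ω : ℝ))
    rw [neg_mul]
    exact this
  have hsum : ∀ v : ℝ, 0 < v →
      (∫ ω, Real.exp (-v * (X ω : ℝ)) ∂μ) - 1 + v * ∫ ω, (X ω : ℝ) ∂μ =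
        ∫ ω, (Real.exp (-v * (X ω : ℝ)) - 1 + v * (X ω : ℝ)) ∂μ := by
    intro v hv
    have h1 : Integrable (fun ω => Real.exp (-v * (X ω : ℝ)) - 1) μ :=
      (hexp_int v hv).sub (integrable_const 1)
    have h2 : Integrable (fun ω => v * (X ω : ℝ)) μ := hint.const_mul v
    rw [integral_add h1 h2, integral_sub (hexp_int v hv) (integrable_const 1),
      integral_const_mul, integral_const]
    simp
  constructor
  · intro v hv
    rw [hsum v hv]
    exact integral_nonneg fun ω => hf_nonneg v ω hv
  -- main identity
  have hslice : ∀ v ∈ Set.Ioi (0:ℝ),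
      ENNReal.ofReal (v ^ (-2 - δ) *
          ((∫ ω, Real.exp (-v * (X ω : ℝ)) ∂μ) - 1 + v * ∫ ω, (X ω : ℝ) ∂μ)) =
        ∫⁻ ω, ENNReal.ofReal (v ^ (-2 - δ) *
          (Real.exp (-v * (X ω : ℝ)) - 1 + v * (X ω : ℝ))) ∂μ := by
    intro v hv
    have hv0 : (0:ℝ) < v := hv
    rw [hsum v hv0, ENNReal.ofReal_mul (by positivity),
      ofReal_integral_eq_lintegral_ofReal (hf_int v hv0)
        (Filter.Eventually.of_forall fun ω => hf_nonneg v ω hv0),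
      ← lintegral_const_mul' _ _ ENNReal.ofReal_ne_top]
    congr 1
    funext ω
    rw [← ENNReal.ofReal_mul (by positivity)]
  rw [setLIntegral_congr_fun measurableSet_Ioi hslice]
  have hmeas : Measurable (Function.uncurry fun (v : ℝ) (ω : Ω) =>
      ENNReal.ofReal (v ^ (-2 - δ) * (Real.exp (-v * (X ω : ℝ)) - 1 + v * (X ω : ℝ)))) := by
    apply Measurable.ennreal_ofReal
    fun_prop
  rw [lintegral_lintegral_swap hmeas.aemeasurable]
  have hω : ∀ ω : Ω,
      ∫⁻ v in Set.Ioi (0:ℝ), ENNReal.ofReal (v ^ (-2 - δ) *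
          (Real.exp (-v * (X ω : ℝ)) - 1 + v * (X ω : ℝ))) =
        ENNReal.ofReal (Real.Gamma (1 - δ) / (δ * (1 + δ))) * ((X ω : ℝ≥0∞)) ^ (1 + δ) := by
    intro ω
    rw [aux_key ⟨hδ0, hδ1⟩ (Nat.cast_nonneg (X ω))]
    have hΓ : 0 < Real.Gamma (1 - δ) := Real.Gamma_pos_of_pos (by linarith)
    rw [ENNReal.ofReal_mul (by positivity)]
    congr 1
    rw [show ((X ω : ℝ≥0∞)) = ENNReal.ofReal ((X ω : ℝ)) by simp,
      ENNReal.ofReal_rpow_of_nonneg (Nat.cast_nonneg _) (by linarith)]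
  rw [lintegral_congr hω, lintegral_const_mul' _ _ ENNReal.ofReal_ne_top, ← mul_assoc]
  have hΓ : 0 < Real.Gamma (1 - δ) := Real.Gamma_pos_of_pos (by linarith)
  rw [← ENNReal.ofReal_mul (by positivity)]
  rw [show δ * (1 + δ) / Real.Gamma (1 - δ) * (Real.Gamma (1 - δ) / (δ * (1 + δ))) = 1 by
    field_simp]
  simp
end

section
/- Let f, g : [0,∞) → [0,∞) be continuous, bounded functions and p, q > 1 constants such that f(t) ~ a·t^{−p} and g(t) ~ b·t^{−q} as t → ∞, with a, b > 0. Then as t → ∞, the convolution satisfies ∫₀^t f(t−u) g(u) du ~ a·(∫₀^∞ g(u) du)·t^{−p} + b·(∫₀^∞ f(u) du)·t^{−q}. In particular, if p < q then ∫₀^t f(t−u)g(u)du ~ a·(∫₀^∞ g)·t^{−p}. -/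
open MeasureTheory Filter Asymptotics Topology

section Aux

open Set Real

lemma conv_ratio_one {f : ℝ → ℝ} {a p : ℝ} (ha : 0 < a)
    (h : f ~[atTop] fun t => a * t ^ (-p)) :
    Tendsto (fun t => f t / (a * t ^ (-p))) atTop (𝓝 1) := by
  have hne : ∀ᶠ t in atTop, a * t ^ (-p) ≠ 0 := by
    filter_upwards [eventually_gt_atTop 0] with t ht
    positivity
  have := (isEquivalent_iff_tendsto_one hne).mp h
  simpa [Pi.div_def] using this

lemma conv_upper {f : ℝ → ℝ} {a p : ℝ} (ha : 0 < a)
    (h : Tendsto (fun t => f t / (a * t ^ (-p))) atTop (𝓝 1)) :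
    ∀ᶠ t in atTop, f t ≤ 2 * a * t ^ (-p) := by
  filter_upwards [h.eventually_le_const (by norm_num : (1:ℝ) < 2),
    eventually_gt_atTop 0] with t h2 ht
  have hpos : 0 < a * t ^ (-p) := by positivity
  have := (div_le_iff₀ hpos).mp h2
  nlinarith

lemma conv_pos {f : ℝ → ℝ} {a p : ℝ} (ha : 0 < a)
    (h : Tendsto (fun t => f t / (a * t ^ (-p))) atTop (𝓝 1)) :
    ∀ᶠ t in atTop, 0 < f t := by
  filter_upwards [h.eventually_const_lt (by norm_num : (0:ℝ) < 1),
    eventually_gt_atTop 0] with t h2 ht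
  have hd : 0 < a * t ^ (-p) := by positivity
  have := mul_pos h2 hd
  rwa [div_mul_cancel₀ _ hd.ne'] at this

lemma conv_integrable {f : ℝ → ℝ} {a p : ℝ} (hc : Continuous f)
    (hf0 : ∀ t, (0:ℝ) ≤ t → 0 ≤ f t) (ha : 0 < a) (hp : 1 < p)
    (hub : ∀ᶠ t in atTop, f t ≤ 2 * a * t ^ (-p)) :
    IntegrableOn f (Ioi (0:ℝ)) := by
  obtain ⟨T₀, hT₀⟩ := eventually_atTop.mp hub
  set T := max T₀ 1 with hT
  have hT1 : (0:ℝ) < T := lt_of_lt_of_le one_pos (le_max_right _ _)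
  have h1 : IntegrableOn f (Ioc 0 T) := hc.integrableOn_Ioc
  have h2 : IntegrableOn f (Ioi T) := by
    have hbase : IntegrableOn (fun s : ℝ => s ^ (-p)) (Ioi T) :=
      integrableOn_Ioi_rpow_of_lt (by linarith) hT1
    refine Integrable.mono' ((hbase.const_mul (2*a)))
      hc.aestronglyMeasurable ?_
    filter_upwards [ae_restrict_mem measurableSet_Ioi] with s hs
    have hs' : T ≤ s := le_of_lt hs
    rw [Real.norm_of_nonneg (hf0 s (le_trans hT1.le hs'))]
    exact hT₀ s (le_trans (le_max_left _ _) hs')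
  have := h1.union h2
  rwa [Set.Ioc_union_Ioi_eq_Ioi hT1.le] at this

lemma half_conv {f g : ℝ → ℝ} {a p : ℝ}
    (hfc : Continuous f) (hgc : Continuous g)
    (hf0 : ∀ t, (0:ℝ) ≤ t → 0 ≤ f t) (hg0 : ∀ t, (0:ℝ) ≤ t → 0 ≤ g t)
    (ha : 0 < a) (hp : 0 < p)
    (hratio : Tendsto (fun t => f t / (a * t ^ (-p))) atTop (𝓝 1))
    (hub : ∀ᶠ t in atTop, f t ≤ 2 * a * t ^ (-p))
    (hgi : IntegrableOn g (Ioi (0:ℝ))) :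
    Tendsto (fun t => (∫ u in (0:ℝ)..(t/2), f (t - u) * g u) / (a * t ^ (-p)))
      atTop (𝓝 (∫ u in Set.Ioi (0:ℝ), g u)) := by
  set F : ℝ → ℝ → ℝ := fun t u =>
    Set.indicator (Set.Ioc 0 (t/2)) (fun u => f (t - u) * g u / (a * t ^ (-p))) u with hF
  obtain ⟨T₀, hT₀⟩ := eventually_atTop.mp hub
  set T : ℝ := max T₀ 1 with hTdef
  have hTpos : (0:ℝ) < T := lt_of_lt_of_le one_pos (le_max_right _ _)
  have hub' : ∀ s : ℝ, T ≤ s → f s ≤ 2 * a * s ^ (-p) :=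
    fun s hs => hT₀ s (le_trans (le_max_left _ _) hs)
  have key : Tendsto (fun t => ∫ u in Set.Ioi (0:ℝ), F t u) atTop
      (𝓝 (∫ u in Set.Ioi (0:ℝ), g u)) := by
    apply tendsto_integral_filter_of_dominated_convergence
      (bound := fun u => 2 * 2 ^ p * g u)
    · filter_upwards with t
      exact (((hfc.comp (continuous_const.sub continuous_id)).mul hgc).div_const
        _).aestronglyMeasurable.indicator measurableSet_Ioc
    · filter_upwards [eventually_ge_atTop (2*T)] with t ht
      have htpos : 0 < t := lt_of_lt_of_le (by linarith) ht
      filter_upwards [ae_restrict_mem measurableSet_Ioi] with u hu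
      have hgu : 0 ≤ g u := hg0 u (le_of_lt hu)
      by_cases hmem : u ∈ Set.Ioc 0 (t/2)
      · rw [hF]; simp only [Set.indicator_of_mem hmem]
        have htu : T ≤ t - u := by
          obtain ⟨hu1, hu2⟩ := hmem; linarith
        have htu0 : (0:ℝ) < t - u := lt_of_lt_of_le hTpos htu
        have hf1 : f (t - u) ≤ 2 * a * (t - u) ^ (-p) := hub' _ htu
        have hf2 : (t - u) ^ (-p) ≤ (t/2) ^ (-p) := by
          apply Real.rpow_le_rpow_of_nonpos (by linarith) (by
            obtain ⟨hu1, hu2⟩ := hmem; linarith) (by linarith)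
        have hf3 : (t/2 : ℝ) ^ (-p) = 2 ^ p * t ^ (-p) := by
          rw [Real.div_rpow htpos.le (by norm_num : (0:ℝ) ≤ 2),
            Real.rpow_neg (by norm_num : (0:ℝ) ≤ 2)]
          have h2p : (0:ℝ) < 2 ^ p := Real.rpow_pos_of_pos (by norm_num) _
          field_simp
        have hdpos : 0 < a * t ^ (-p) := by positivity
        have hnum : f (t - u) * g u ≤ (2 * a * (2 ^ p * t ^ (-p))) * g u := by
          apply mul_le_mul_of_nonneg_right _ hgu
          calc f (t - u) ≤ 2 * a * (t - u) ^ (-p) := hf1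
            _ ≤ 2 * a * ((t/2) ^ (-p)) := by nlinarith
            _ = 2 * a * (2 ^ p * t ^ (-p)) := by rw [hf3]
        have hnn : 0 ≤ f (t - u) * g u / (a * t ^ (-p)) := by
          apply div_nonneg _ hdpos.le
          exact mul_nonneg (hf0 _ htu0.le) hgu
        rw [Real.norm_of_nonneg hnn]
        rw [div_le_iff₀ hdpos]
        calc f (t - u) * g u ≤ (2 * a * (2 ^ p * t ^ (-p))) * g u := hnum
          _ = 2 * 2 ^ p * g u * (a * t ^ (-p)) := by ring
      · rw [hF]; simp only [Set.indicator_of_notMem hmem]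
        simp only [norm_zero]
        positivity
    · exact hgi.const_mul _
    · filter_upwards [ae_restrict_mem measurableSet_Ioi] with u hu
      have hev : ∀ᶠ t in atTop, F t u = f (t - u) * g u / (a * t ^ (-p)) := by
        filter_upwards [eventually_ge_atTop (2*u)] with t ht
        rw [hF]
        exact Set.indicator_of_mem (Set.mem_Ioc.mpr ⟨Set.mem_Ioi.mp hu, by linarith⟩) _
      have T1 : Tendsto (fun t => f (t - u) / (a * t ^ (-p))) atTop (𝓝 1) := by
        have hshift : Tendsto (fun t => f (t - u) / (a * (t - u) ^ (-p))) atTop (𝓝 1) := by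
          have := hratio.comp (tendsto_atTop_add_const_right atTop (-u) tendsto_id)
          simpa [Function.comp_def, sub_eq_add_neg] using this
        have hquot : Tendsto (fun t => ((t - u)/t) ^ (-p)) atTop (𝓝 1) := by
          have h1 : Tendsto (fun t : ℝ => (t - u)/t) atTop (𝓝 1) := by
            have h2 : Tendsto (fun t : ℝ => 1 - u * t⁻¹) atTop (𝓝 1) := by
              have := (tendsto_const_nhds (x := (1:ℝ))).sub
                ((tendsto_const_nhds (x := u)).mul tendsto_inv_atTop_zero)
              simpa using this
            apply h2.congr'
            filter_upwards [eventually_gt_atTop 0] with t ht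
            field_simp
          have hc : ContinuousAt (fun x : ℝ => x ^ (-p)) 1 :=
            Real.continuousAt_rpow_const 1 (-p) (Or.inl one_ne_zero)
          have := hc.tendsto.comp h1
          simpa [Real.one_rpow, Function.comp_def] using this
        have := hshift.mul hquot
        rw [one_mul] at this
        apply this.congr'
        filter_upwards [eventually_gt_atTop (max u 0)] with t ht
        have htpos : (0:ℝ) < t := lt_of_le_of_lt (le_max_right _ _) ht
        have htu : (0:ℝ) < t - u := by
          have := lt_of_le_of_lt (le_max_left u 0) ht; linarith
        rw [Real.div_rpow htu.le htpos.le]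
        have h1 : (t - u) ^ (-p) ≠ 0 := (Real.rpow_pos_of_pos htu _).ne'
        have h2 : (t:ℝ) ^ (-p) ≠ 0 := (Real.rpow_pos_of_pos htpos _).ne'
        field_simp
      have := T1.mul (tendsto_const_nhds (x := g u))
      rw [one_mul] at this
      apply Tendsto.congr' _ this
      filter_upwards [hev] with t hev
      rw [hev, div_mul_eq_mul_div]
  apply key.congr'
  filter_upwards [eventually_gt_atTop 0] with t ht
  rw [hF]
  rw [setIntegral_indicator measurableSet_Ioc,
    Set.inter_eq_right.mpr Set.Ioc_subset_Ioi_self,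
    intervalIntegral.integral_of_le (by linarith : (0:ℝ) ≤ t/2)]
  rw [integral_div]

lemma pos_integral_of_asym {g : ℝ → ℝ} {b q : ℝ} (hb : 0 < b)
    (hg0 : ∀ t, (0:ℝ) ≤ t → 0 ≤ g t)
    (hgi : IntegrableOn g (Ioi (0:ℝ)))
    (hratio : Tendsto (fun t => g t / (b * t ^ (-q))) atTop (𝓝 1)) :
    0 < ∫ u in Set.Ioi (0:ℝ), g u := by
  rw [setIntegral_pos_iff_support_of_nonneg_ae ?_ hgi]
  · obtain ⟨T, hT⟩ := eventually_atTop.mp (conv_pos hb hratio)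
    have hsub : Set.Ioi (max T 0) ⊆ Function.support g ∩ Set.Ioi 0 := by
      intro s hs
      refine ⟨(hT s (le_of_lt (lt_of_le_of_lt (le_max_left _ _) hs))).ne', ?_⟩
      exact lt_of_le_of_lt (le_max_right _ _) (Set.mem_Ioi.mp hs)
    refine lt_of_lt_of_le ?_ (measure_mono hsub)
    rw [Real.volume_Ioi]
    exact ENNReal.zero_lt_top
  · filter_upwards [ae_restrict_mem measurableSet_Ioi] with u hu
    exact hg0 u (le_of_lt hu)

lemma littleO_of_tendsto_div {A : ℝ → ℝ} {a c p : ℝ} (ha : 0 < a)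
    (h : Tendsto (fun t => A t / (a * t ^ (-p))) atTop (𝓝 c)) :
    (fun t => A t - a * c * t ^ (-p)) =o[atTop] fun t : ℝ => t ^ (-p) := by
  rw [isLittleO_iff_tendsto' ?_]
  · have h2 : Tendsto (fun t => a * (A t / (a * t ^ (-p)) - c)) atTop (𝓝 0) := by
      have := (h.sub_const c).const_mul a
      simpa using this
    apply h2.congr'
    filter_upwards [eventually_gt_atTop 0] with t ht
    have h1 : (t:ℝ) ^ (-p) ≠ 0 := (Real.rpow_pos_of_pos ht _).ne'
    field_simp
  · filter_upwards [eventually_gt_atTop 0] with t ht h0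
    exact absurd h0 (Real.rpow_pos_of_pos ht _).ne'

lemma rpow_littleO {p q : ℝ} (h : p < q) :
    (fun t : ℝ => t ^ (-q)) =o[atTop] fun t : ℝ => t ^ (-p) := by
  rw [isLittleO_iff_tendsto' ?_]
  · have h2 : Tendsto (fun t : ℝ => t ^ (-(q - p))) atTop (𝓝 0) :=
      tendsto_rpow_neg_atTop (by linarith)
    apply h2.congr'
    filter_upwards [eventually_gt_atTop 0] with t ht
    rw [← Real.rpow_sub ht]
    ring_nf
  · filter_upwards [eventually_gt_atTop 0] with t ht h0
    exact absurd h0 (Real.rpow_pos_of_pos ht _).ne'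

end Aux

theorem convolution_asymptotics (f g : ℝ → ℝ)
    (hfc : Continuous f) (hgc : Continuous g)
    (hf0 : ∀ t, (0:ℝ) ≤ t → 0 ≤ f t) (hg0 : ∀ t, (0:ℝ) ≤ t → 0 ≤ g t)
    (hfb : ∃ M : ℝ, ∀ t, (0:ℝ) ≤ t → f t ≤ M) (hgb : ∃ M : ℝ, ∀ t, (0:ℝ) ≤ t → g t ≤ M)
    (a b p q : ℝ) (ha : 0 < a) (hb : 0 < b) (hp : 1 < p) (hq : 1 < q)
    (hfasym : f ~[atTop] fun t => a * t ^ (-p))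
    (hgasym : g ~[atTop] fun t => b * t ^ (-q)) :
    ((fun t => ∫ u in (0:ℝ)..t, f (t - u) * g u) ~[atTop]
      fun t => a * (∫ u in Set.Ioi (0:ℝ), g u) * t ^ (-p)
        + b * (∫ u in Set.Ioi (0:ℝ), f u) * t ^ (-q)) ∧
    (p < q → (fun t => ∫ u in (0:ℝ)..t, f (t - u) * g u) ~[atTop]
      fun t => a * (∫ u in Set.Ioi (0:ℝ), g u) * t ^ (-p)) := by
  have hfr := conv_ratio_one ha hfasym
  have hgr := conv_ratio_one hb hgasym
  have hfu := conv_upper ha hfr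
  have hgu := conv_upper hb hgr
  have hfi := conv_integrable hfc hf0 ha hp hfu
  have hgi := conv_integrable hgc hg0 hb hq hgu
  set G : ℝ := ∫ u in Set.Ioi (0:ℝ), g u with hGdef
  set Fv : ℝ := ∫ u in Set.Ioi (0:ℝ), f u with hFdef
  have hGpos : 0 < G := pos_integral_of_asym hb hg0 hgi hgr
  have hFpos : 0 < Fv := pos_integral_of_asym ha hf0 hfi hfr
  set A : ℝ → ℝ := fun t => ∫ u in (0:ℝ)..(t/2), f (t - u) * g u with hAdef
  set B : ℝ → ℝ := fun t => ∫ u in (0:ℝ)..(t/2), g (t - u) * f u with hBdef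
  have hA : Tendsto (fun t => A t / (a * t ^ (-p))) atTop (𝓝 G) :=
    half_conv hfc hgc hf0 hg0 ha (by linarith) hfr hfu hgi
  have hB : Tendsto (fun t => B t / (b * t ^ (-q))) atTop (𝓝 Fv) :=
    half_conv hgc hfc hg0 hf0 hb (by linarith) hgr hgu hfi
  have hsplit : ∀ᶠ t in atTop, (∫ u in (0:ℝ)..t, f (t - u) * g u) = A t + B t := by
    filter_upwards [eventually_ge_atTop 0] with t ht
    have hint : ∀ c d : ℝ, IntervalIntegrable (fun u => f (t - u) * g u) volume c d :=
      fun c d => ((hfc.comp (continuous_const.sub continuous_id)).mul hgc).intervalIntegrable c d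
    rw [← intervalIntegral.integral_add_adjacent_intervals (hint 0 (t/2)) (hint (t/2) t)]
    congr 1
    have hcs := intervalIntegral.integral_comp_sub_left
      (a := t/2) (b := t) (fun x => f x * g (t - x)) t
    simp only [sub_sub_cancel, sub_self, sub_half] at hcs
    calc ∫ u in (t/2)..t, f (t - u) * g u
        = ∫ x in (0:ℝ)..(t/2), f x * g (t - x) := hcs
      _ = B t := by
          rw [hBdef]
          exact intervalIntegral.integral_congr fun x _ => mul_comm _ _
  set D : ℝ → ℝ := fun t => a * G * t ^ (-p) + b * Fv * t ^ (-q) with hDdef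
  have o1 : (fun t => A t - a * G * t ^ (-p)) =o[atTop] fun t : ℝ => t ^ (-p) :=
    littleO_of_tendsto_div ha hA
  have o2 : (fun t => B t - b * Fv * t ^ (-q)) =o[atTop] fun t : ℝ => t ^ (-q) :=
    littleO_of_tendsto_div hb hB
  have hO1 : (fun t : ℝ => t ^ (-p)) =O[atTop] D := by
    rw [isBigO_iff]
    refine ⟨(a * G)⁻¹, ?_⟩
    filter_upwards [eventually_gt_atTop 0] with t ht
    have h1 : (0:ℝ) < t ^ (-p) := Real.rpow_pos_of_pos ht _
    have h2 : (0:ℝ) < t ^ (-q) := Real.rpow_pos_of_pos ht _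
    have hD : 0 < D t := by
      rw [hDdef]; dsimp only; positivity
    rw [Real.norm_of_nonneg h1.le, Real.norm_of_nonneg hD.le, hDdef]
    dsimp only
    have haG : (0:ℝ) < a * G := mul_pos ha hGpos
    have hbF : (0:ℝ) < b * Fv := mul_pos hb hFpos
    rw [mul_add]
    have hkey : (a*G)⁻¹ * (a * G * t ^ (-p)) = t ^ (-p) := by field_simp
    rw [hkey]
    have : 0 ≤ (a*G)⁻¹ * (b * Fv * t ^ (-q)) :=
      mul_nonneg (inv_pos.mpr haG).le (mul_pos hbF h2).le
    linarith
  have hO2 : (fun t : ℝ => t ^ (-q)) =O[atTop] D := by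
    rw [isBigO_iff]
    refine ⟨(b * Fv)⁻¹, ?_⟩
    filter_upwards [eventually_gt_atTop 0] with t ht
    have h1 : (0:ℝ) < t ^ (-p) := Real.rpow_pos_of_pos ht _
    have h2 : (0:ℝ) < t ^ (-q) := Real.rpow_pos_of_pos ht _
    have hD : 0 < D t := by
      rw [hDdef]; dsimp only; positivity
    rw [Real.norm_of_nonneg h2.le, Real.norm_of_nonneg hD.le, hDdef]
    dsimp only
    have haG : (0:ℝ) < a * G := mul_pos ha hGpos
    have hbF : (0:ℝ) < b * Fv := mul_pos hb hFpos
    rw [mul_add]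
    have hkey : (b*Fv)⁻¹ * (b * Fv * t ^ (-q)) = t ^ (-q) := by field_simp
    rw [hkey]
    have : 0 ≤ (b*Fv)⁻¹ * (a * G * t ^ (-p)) :=
      mul_nonneg (inv_pos.mpr hbF).le (mul_pos haG h1).le
    linarith
  have hsum : (fun t => (A t - a * G * t ^ (-p)) + (B t - b * Fv * t ^ (-q)))
      =o[atTop] D := (o1.trans_isBigO hO1).add (o2.trans_isBigO hO2)
  have heq : (fun t => ∫ u in (0:ℝ)..t, f (t - u) * g u) ~[atTop] D := by
    rw [IsEquivalent]
    apply IsLittleO.congr' hsum ?_ EventuallyEq.rfl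
    filter_upwards [hsplit] with t hs
    simp only [Pi.sub_apply, hs, hDdef]
    ring
  constructor
  · exact heq
  · intro hpq
    refine heq.trans ?_
    rw [IsEquivalent]
    have h1 : (fun t => b * Fv * t ^ (-q)) =o[atTop] fun t : ℝ => t ^ (-p) :=
      (rpow_littleO hpq).const_mul_left _
    have h2 : (fun t : ℝ => t ^ (-p)) =O[atTop] fun t => a * G * t ^ (-p) :=
      isBigO_self_const_mul (mul_pos ha hGpos).ne' _ _
    apply IsLittleO.congr' (h1.trans_isBigO h2) ?_ EventuallyEq.rfl
    apply Eventually.of_forall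
    intro t
    simp only [Pi.sub_apply, hDdef]
    ring
end

section
/- Let f be a probability generating function with 0 < f'(1) < ∞ and let δ ∈ (0,1). If ∫₀^∞ v^{−2−δ}·(f(e^{−v}) − 1 + f'(1)(1 − e^{−v})) dv < ∞, then the random variable ξ with generating function f satisfies E[ξ^{1+δ}] < ∞, and conversely. -/
open MeasureTheory Real Set
open scoped ENNReal NNReal

lemma aux_one_sub_pow_le (y : ℝ) (h0 : 0 ≤ y) (h1 : y ≤ 1) :
    ∀ n : ℕ, (1 - y) ^ n ≤ 1 - n * y + (n:ℝ)^2 * y^2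
  | 0 => by norm_num
  | (n+1) => by
    have ih := aux_one_sub_pow_le y h0 h1 n
    have hnn : (0:ℝ) ≤ 1 - n * y + (n:ℝ)^2 * y^2 := by nlinarith [sq_nonneg ((n:ℝ)*y - 1), mul_nonneg (Nat.cast_nonneg (α := ℝ) n) h0]
    have h2 : (1-y)^(n+1) = (1-y)^n * (1-y) := pow_succ _ _
    have h3 : (1-y)^n * (1-y) ≤ (1 - n*y + (n:ℝ)^2*y^2) * (1-y) :=
      mul_le_mul_of_nonneg_right ih (by linarith)
    rw [h2]
    push_cast
    nlinarith [sq_nonneg y, mul_nonneg (mul_nonneg (sq_nonneg (n:ℝ)) h0) (sq_nonneg y),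
      mul_nonneg (Nat.cast_nonneg (α := ℝ) n) (sq_nonneg y)]

-- φ n v := exp (-v * n) - 1 + n * (1 - exp (-v))

lemma aux_exp_pow (v : ℝ) (n : ℕ) : Real.exp (-v * n) = (1 - (1 - Real.exp (-v)))^n := by
  rw [mul_comm, Real.exp_nat_mul]; ring_nf

lemma aux_phi_nonneg (v : ℝ) (hv : 0 ≤ v) (n : ℕ) :
    0 ≤ Real.exp (-v * n) - 1 + n * (1 - Real.exp (-v)) := by
  rw [aux_exp_pow]
  have h := one_add_mul_le_pow (a := -(1 - Real.exp (-v))) (by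
    have := Real.exp_pos (-v); nlinarith) n
  have heq : (1:ℝ) + -(1 - Real.exp (-v)) = 1 - (1 - Real.exp (-v)) := by ring
  rw [heq] at h
  nlinarith [h]

lemma aux_y_mem (v : ℝ) (hv : 0 ≤ v) :
    0 ≤ 1 - Real.exp (-v) ∧ 1 - Real.exp (-v) ≤ 1 ∧ 1 - Real.exp (-v) ≤ v := by
  have h1 := Real.exp_pos (-v)
  have h2 : Real.exp (-v) ≤ 1 := Real.exp_le_one_iff.mpr (by linarith)
  have h3 : 1 - v ≤ Real.exp (-v) := by
    have := Real.add_one_le_exp (-v); linarith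
  exact ⟨by linarith, by linarith, by linarith⟩

lemma aux_phi_le_sq (v : ℝ) (hv : 0 ≤ v) (n : ℕ) :
    Real.exp (-v * n) - 1 + n * (1 - Real.exp (-v)) ≤ (n:ℝ)^2 * v^2 := by
  obtain ⟨hy0, hy1, hyv⟩ := aux_y_mem v hv
  rw [aux_exp_pow]
  set y := 1 - Real.exp (-v) with hy
  have h := aux_one_sub_pow_le y hy0 hy1 n
  have : (n:ℝ)^2 * y^2 ≤ (n:ℝ)^2 * v^2 := by gcongr
  nlinarith

lemma aux_phi_le_lin (v : ℝ) (hv : 0 ≤ v) (n : ℕ) :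
    Real.exp (-v * n) - 1 + n * (1 - Real.exp (-v)) ≤ (n:ℝ) * v := by
  obtain ⟨hy0, hy1, hyv⟩ := aux_y_mem v hv
  rw [aux_exp_pow]
  set y := 1 - Real.exp (-v) with hy
  have h : (1 - y)^n ≤ 1 := pow_le_one₀ (by linarith) (by linarith)
  have : (n:ℝ) * y ≤ (n:ℝ) * v := by nlinarith [Nat.cast_nonneg (α := ℝ) n]
  nlinarith

lemma aux_phi_lower (n : ℕ) (hn : 5 ≤ n) (v : ℝ) (hv : v ∈ Set.Icc (4 / (n:ℝ)) (5 / (n:ℝ))) :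
    1 ≤ Real.exp (-v * n) - 1 + n * (1 - Real.exp (-v)) := by
  have hn0 : (0:ℝ) < n := by positivity
  have hn5 : (5:ℝ) ≤ n := by exact_mod_cast hn
  have hv0 : 0 < v := lt_of_lt_of_le (by positivity) hv.1
  have hv1 : v ≤ 1 := hv.2.trans (by rw [div_le_one hn0]; linarith)
  -- 1 - exp(-v) ≥ v/(1+v) ≥ v/2
  have hexp : Real.exp (-v) ≤ 1 / (1 + v) := by
    have h1 : 1 + v ≤ Real.exp v := by have := Real.add_one_le_exp v; linarith
    have h2 : 0 < 1 + v := by linarith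
    rw [Real.exp_neg, ← one_div]
    exact one_div_le_one_div_of_le h2 h1
  have hy : v / 2 ≤ 1 - Real.exp (-v) := by
    have : 1 / (1+v) ≤ 1 - v/2 := by
      rw [div_le_iff₀ (by linarith)]; nlinarith
    linarith
  have h4 : 4 ≤ (n:ℝ) * v := by
    have := hv.1
    calc (4:ℝ) = n * (4 / n) := by field_simp
    _ ≤ n * v := by nlinarith
  have : 2 ≤ (n:ℝ) * (1 - Real.exp (-v)) := by
    calc (2:ℝ) ≤ n * v / 2 := by linarith
    _ ≤ n * (1 - Real.exp (-v)) := by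
        rw [div_le_iff₀ (by norm_num)] at hy ⊢
        nlinarith
  nlinarith [Real.exp_pos (-v * n)]

noncomputable def auxH (δ : ℝ) (n : ℕ) : ℝ≥0∞ :=
  ∫⁻ v in Ioi (0:ℝ),
    ENNReal.ofReal (v ^ (-2-δ) * (Real.exp (-v*n) - 1 + n*(1-Real.exp (-v))))

lemma auxH_zero (δ : ℝ) : auxH δ 0 = 0 := by
  rw [auxH]
  rw [setLIntegral_congr_fun measurableSet_Ioi
    (fun v (hv : v ∈ Ioi (0:ℝ)) => ?_), lintegral_zero]
  norm_num

lemma auxH_upper {δ : ℝ} (hδ : δ ∈ Set.Ioo (0:ℝ) 1) (n : ℕ) :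
    auxH δ n ≤ ENNReal.ofReal ((1/(1-δ) + 1/δ) * (n:ℝ) ^ (1+δ)) := by
  obtain ⟨hδ0, hδ1⟩ := hδ
  rcases Nat.eq_zero_or_pos n with rfl | hn
  · rw [auxH_zero]; exact zero_le
  have hn0 : (0:ℝ) < n := by positivity
  set a : ℝ := 1 / n with ha
  have ha0 : 0 < a := by positivity
  rw [auxH, ← Ioc_union_Ioi_eq_Ioi ha0.le,
    lintegral_union measurableSet_Ioi (Set.Ioc_disjoint_Ioi le_rfl)]
  have h1 : (∫⁻ v in Ioc (0:ℝ) a,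
      ENNReal.ofReal (v ^ (-2-δ) * (Real.exp (-v*n) - 1 + n*(1-Real.exp (-v)))))
      ≤ ENNReal.ofReal ((n:ℝ)^2 * (a ^ (1-δ) / (1-δ))) := by
    have hb : (∫⁻ v in Ioc (0:ℝ) a,
        ENNReal.ofReal ((n:ℝ)^2 * v ^ (-δ)))
        = ENNReal.ofReal ((n:ℝ)^2 * (a ^ (1-δ) / (1-δ))) := by
      have hInt : IntegrableOn (fun v : ℝ => v ^ (-δ)) (Ioc 0 a) := by
        rw [← intervalIntegrable_iff_integrableOn_Ioc_of_le ha0.le]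
        exact intervalIntegral.intervalIntegrable_rpow' (by linarith)
      rw [← ofReal_integral_eq_lintegral_ofReal (hInt.const_mul _)
        ((ae_restrict_mem measurableSet_Ioc).mono (fun v hv =>
          mul_nonneg (by positivity) (Real.rpow_nonneg hv.1.le _)))]
      congr 1
      rw [integral_const_mul]
      congr 1
      rw [← intervalIntegral.integral_of_le ha0.le,
        integral_rpow (Or.inl (by linarith))]
      rw [Real.zero_rpow (by linarith : -δ + 1 ≠ 0)]
      rw [show -δ + 1 = 1 - δ by ring]
      ring
    refine le_trans (setLIntegral_mono' measurableSet_Ioc (fun v hv => ?_)) hb.le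
    apply ENNReal.ofReal_le_ofReal
    have hv0 : 0 < v := hv.1
    have key : v ^ (-2-δ) * (Real.exp (-v*n) - 1 + n*(1-Real.exp (-v)))
        ≤ v ^ (-2-δ) * ((n:ℝ)^2 * v^2) := by
      apply mul_le_mul_of_nonneg_left (aux_phi_le_sq v hv0.le n)
        (Real.rpow_nonneg hv0.le _)
    refine key.trans (le_of_eq ?_)
    rw [show v^2 = v ^ ((2:ℕ):ℝ) by rw [Real.rpow_natCast],
      show v ^ (-2-δ) * ((n:ℝ)^2 * v ^ ((2:ℕ):ℝ)) = (n:ℝ)^2 * (v ^ (-2-δ) * v ^ ((2:ℕ):ℝ)) by ring,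
      ← Real.rpow_add hv0]
    rw [show -2-δ+((2:ℕ):ℝ) = -δ by push_cast; ring]
  have h2 : (∫⁻ v in Ioi a,
      ENNReal.ofReal (v ^ (-2-δ) * (Real.exp (-v*n) - 1 + n*(1-Real.exp (-v)))))
      ≤ ENNReal.ofReal ((n:ℝ) * (a ^ (-δ) / δ)) := by
    have hb : (∫⁻ v in Ioi a, ENNReal.ofReal ((n:ℝ) * v ^ (-1-δ)))
        = ENNReal.ofReal ((n:ℝ) * (a ^ (-δ) / δ)) := by
      have hInt : IntegrableOn (fun v : ℝ => v ^ (-1-δ)) (Ioi a) :=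
        integrableOn_Ioi_rpow_of_lt (by linarith) ha0
      rw [← ofReal_integral_eq_lintegral_ofReal (hInt.const_mul _)
        ((ae_restrict_mem measurableSet_Ioi).mono (fun v hv =>
          mul_nonneg (by positivity) (Real.rpow_nonneg (le_trans ha0.le (le_of_lt hv)) _)))]
      congr 1
      rw [integral_const_mul, integral_Ioi_rpow_of_lt (by linarith) ha0]
      rw [show -1-δ+1 = -δ by ring]
      field_simp
    refine le_trans (setLIntegral_mono' measurableSet_Ioi (fun v hv => ?_)) hb.le
    apply ENNReal.ofReal_le_ofReal
    have hv0 : 0 < v := lt_trans ha0 hv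
    have key : v ^ (-2-δ) * (Real.exp (-v*n) - 1 + n*(1-Real.exp (-v)))
        ≤ v ^ (-2-δ) * ((n:ℝ) * v) := by
      apply mul_le_mul_of_nonneg_left (aux_phi_le_lin v hv0.le n)
        (Real.rpow_nonneg hv0.le _)
    refine key.trans (le_of_eq ?_)
    rw [show v ^ (-2-δ) * ((n:ℝ) * v) = (n:ℝ) * (v ^ (-2-δ) * v) by ring,
      ← Real.rpow_add_one hv0.ne', show -2-δ+1 = -1-δ by ring]
  refine le_trans (add_le_add h1 h2) ?_
  rw [← ENNReal.ofReal_add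
    (mul_nonneg (by positivity) (div_nonneg (Real.rpow_nonneg ha0.le _) (by linarith)))
    (mul_nonneg hn0.le (div_nonneg (Real.rpow_nonneg ha0.le _) hδ0.le))]
  apply ENNReal.ofReal_le_ofReal
  have e1 : (n:ℝ)^2 * (a ^ (1-δ) / (1-δ)) = (1/(1-δ)) * (n:ℝ)^(1+δ) := by
    rw [ha, one_div, Real.inv_rpow hn0.le, ← Real.rpow_neg hn0.le,
      ← Real.rpow_natCast (n:ℝ) 2, div_eq_mul_inv, ← mul_assoc, ← Real.rpow_add hn0,
      show ((2:ℕ):ℝ) + -(1-δ) = 1 + δ by push_cast; ring]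
    ring
  have e2 : (n:ℝ) * (a ^ (-δ) / δ) = (1/δ) * (n:ℝ)^(1+δ) := by
    rw [ha, one_div, Real.inv_rpow hn0.le, ← Real.rpow_neg hn0.le,
      div_eq_mul_inv, ← mul_assoc]
    nth_rewrite 1 [show (n:ℝ) = (n:ℝ) ^ (1:ℝ) by rw [Real.rpow_one]]
    rw [← Real.rpow_add hn0, show (1:ℝ) + δ = 1 + δ by ring]
    ring
  exact le_of_eq (by rw [e1, e2]; ring)

lemma auxH_lower {δ : ℝ} (hδ : δ ∈ Set.Ioo (0:ℝ) 1) (n : ℕ) (hn : 5 ≤ n) :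
    ENNReal.ofReal ((n:ℝ) ^ (1+δ) / 5 ^ (2+δ)) ≤ auxH δ n := by
  have hn0 : (0:ℝ) < n := by positivity
  have h40 : (0:ℝ) < 4 / n := by positivity
  have hsub : Ioc ((4:ℝ)/n) (5/n) ⊆ Ioi (0:ℝ) := fun v hv => lt_trans h40 hv.1
  refine le_trans ?_ (lintegral_mono_set hsub)
  have hpt : ∀ v ∈ Ioc ((4:ℝ)/n) (5/n),
      ENNReal.ofReal ((5/(n:ℝ)) ^ (-2-δ)) ≤
      ENNReal.ofReal (v ^ (-2-δ) * (Real.exp (-v*n) - 1 + n*(1-Real.exp (-v)))) := by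
    intro v hv
    apply ENNReal.ofReal_le_ofReal
    have hv0 : 0 < v := lt_trans h40 hv.1
    have hφ : 1 ≤ Real.exp (-v*n) - 1 + n*(1-Real.exp (-v)) :=
      aux_phi_lower n hn v ⟨hv.1.le, hv.2⟩
    have hrp : (5/(n:ℝ)) ^ (-2-δ) ≤ v ^ (-2-δ) :=
      Real.rpow_le_rpow_of_nonpos hv0 hv.2 (by linarith [hδ.1])
    calc (5/(n:ℝ)) ^ (-2-δ) ≤ v ^ (-2-δ) := hrp
    _ = v ^ (-2-δ) * 1 := by ring
    _ ≤ _ := by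
        apply mul_le_mul_of_nonneg_left hφ (Real.rpow_nonneg hv0.le _)
  refine le_trans ?_ (le_trans (le_of_eq (setLIntegral_const _ _).symm)
    (setLIntegral_mono' measurableSet_Ioc hpt))
  rw [Real.volume_Ioc]
  rw [show (5:ℝ)/n - 4/n = 1/n by ring]
  rw [← ENNReal.ofReal_mul (by positivity)]
  apply ENNReal.ofReal_le_ofReal
  have key : (5/(n:ℝ)) ^ (-2-δ) * (1/n) = (n:ℝ)^(1+δ) / 5 ^ (2+δ) := by
    rw [show (-2-δ) = -(2+δ) by ring, Real.rpow_neg (by positivity),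
      Real.div_rpow (by norm_num : (0:ℝ) ≤ 5) hn0.le, inv_div]
    have hsplit : (n:ℝ) ^ (2+δ) = (n:ℝ)^(1+δ) * n := by
      rw [show (2:ℝ)+δ = (1+δ)+1 by ring, Real.rpow_add hn0, Real.rpow_one]
    rw [hsplit]
    have h5 : (0:ℝ) < 5 ^ (2+δ) := Real.rpow_pos_of_pos (by norm_num) _
    field_simp
  exact le_of_eq key.symm

theorem fractional_moment_iff_integral {Ω : Type*} [MeasurableSpace Ω] (μ : Measure Ω)
    [IsProbabilityMeasure μ] (ξ : Ω → ℕ) (hξ : Measurable ξ)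
    (hint : Integrable (fun ω => (ξ ω : ℝ)) μ)
    (hmean : 0 < ∫ ω, (ξ ω : ℝ) ∂μ)
    (δ : ℝ) (hδ : δ ∈ Set.Ioo (0:ℝ) 1) :
    IntegrableOn (fun v => v ^ (-2 - δ) *
        ((∫ ω, Real.exp (-v * (ξ ω : ℝ)) ∂μ) - 1 +
          (∫ ω, (ξ ω : ℝ) ∂μ) * (1 - Real.exp (-v)))) (Set.Ioi 0) volume ↔
      Integrable (fun ω => (ξ ω : ℝ) ^ (1 + δ)) μ := by
  obtain ⟨hδ0, hδ1⟩ := hδ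
  have hcast : Measurable fun ω => (ξ ω : ℝ) := measurable_from_top.comp hξ
  set m : ℝ := ∫ ω, (ξ ω : ℝ) ∂μ with hm
  set G : ℝ → ℝ := fun v => v ^ (-2 - δ) *
      ((∫ ω, Real.exp (-v * (ξ ω : ℝ)) ∂μ) - 1 + m * (1 - Real.exp (-v))) with hG
  set Φ : ℝ → Ω → ℝ≥0∞ := fun v ω =>
    ENNReal.ofReal (v ^ (-2-δ) *
      (Real.exp (-v * (ξ ω:ℝ)) - 1 + (ξ ω:ℝ) * (1 - Real.exp (-v)))) with hΦ
  have hΦmeas : Measurable (Function.uncurry Φ) := by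
    apply Measurable.ennreal_ofReal
    apply Measurable.mul
    · exact (by measurability : Measurable fun v : ℝ => v ^ (-2-δ)).comp measurable_fst
    · apply Measurable.add
      · exact (Real.measurable_exp.comp
          (measurable_fst.neg.mul (hcast.comp measurable_snd))).sub measurable_const
      · exact (hcast.comp measurable_snd).mul
          (measurable_const.sub (Real.measurable_exp.comp measurable_fst.neg))
  -- pointwise facts for v > 0
  have hpointwise : ∀ v : ℝ, v ∈ Ioi (0:ℝ) →
      Integrable (fun ω => Real.exp (-v * (ξ ω:ℝ)) - 1 + (ξ ω:ℝ) * (1 - Real.exp (-v))) μ ∧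
      ((∫ ω, Real.exp (-v * (ξ ω:ℝ)) ∂μ) - 1 + m * (1 - Real.exp (-v))
        = ∫ ω, (Real.exp (-v * (ξ ω:ℝ)) - 1 + (ξ ω:ℝ) * (1 - Real.exp (-v))) ∂μ) := by
    intro v hv
    have hexp_meas : Measurable fun ω => Real.exp (-v * (ξ ω:ℝ)) :=
      Real.measurable_exp.comp (hcast.const_mul (-v))
    have hIexp : Integrable (fun ω => Real.exp (-v * (ξ ω:ℝ))) μ := by
      refine (integrable_const (1:ℝ)).mono' hexp_meas.aestronglyMeasurable ?_
      filter_upwards with ω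
      rw [Real.norm_eq_abs, abs_of_pos (Real.exp_pos _)]
      have hle : -v * (ξ ω:ℝ) ≤ 0 := by
        nlinarith [mul_nonneg (le_of_lt (mem_Ioi.mp hv)) (Nat.cast_nonneg (α := ℝ) (ξ ω))]
      calc Real.exp (-v * (ξ ω:ℝ)) ≤ Real.exp 0 := Real.exp_le_exp.mpr hle
      _ = 1 := Real.exp_zero
    have hIlin : Integrable (fun ω => (ξ ω:ℝ) * (1 - Real.exp (-v))) μ := hint.mul_const _
    have hIsub : Integrable (fun ω => Real.exp (-v * (ξ ω:ℝ)) - 1) μ :=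
      hIexp.sub (integrable_const 1)
    refine ⟨hIsub.add hIlin, ?_⟩
    rw [integral_add hIsub hIlin,
      integral_sub hIexp (integrable_const 1), integral_const, integral_mul_const]
    simp [measure_univ, hm]
  have hae : ∀ v ∈ Ioi (0:ℝ), ENNReal.ofReal (G v) = ∫⁻ ω, Φ v ω ∂μ := by
    intro v hv
    obtain ⟨hIφ, heq⟩ := hpointwise v hv
    have hv0 : (0:ℝ) < v := hv
    have hφnn : 0 ≤ᵐ[μ] fun ω =>
        Real.exp (-v * (ξ ω:ℝ)) - 1 + (ξ ω:ℝ) * (1 - Real.exp (-v)) :=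
      Filter.Eventually.of_forall fun ω => aux_phi_nonneg v hv0.le (ξ ω)
    rw [hG]
    simp only
    rw [heq, ENNReal.ofReal_mul (Real.rpow_nonneg hv0.le _),
      ofReal_integral_eq_lintegral_ofReal hIφ hφnn,
      ← lintegral_const_mul' _ _ ENNReal.ofReal_ne_top]
    refine lintegral_congr fun ω => ?_
    rw [hΦ]
    simp only
    rw [← ENNReal.ofReal_mul (Real.rpow_nonneg hv0.le _)]
  have hswap : (∫⁻ v in Ioi (0:ℝ), ∫⁻ ω, Φ v ω ∂μ) = ∫⁻ ω, auxH δ (ξ ω) ∂μ := by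
    rw [lintegral_lintegral_swap hΦmeas.aemeasurable]
    rfl
  -- measurability of G
  have hGmeas : Measurable G := by
    apply Measurable.mul
    · exact (by measurability : Measurable fun v : ℝ => v ^ (-2-δ))
    · apply Measurable.add
      · refine Measurable.sub ?_ measurable_const
        have hsm : StronglyMeasurable (fun v : ℝ => ∫ ω, Real.exp (-v * (ξ ω:ℝ)) ∂μ) := by
          apply MeasureTheory.StronglyMeasurable.integral_prod_right
          exact (Real.measurable_exp.comp
            (measurable_fst.neg.mul (hcast.comp measurable_snd))).stronglyMeasurable
        exact hsm.measurable
      · exact measurable_const.mul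
          (measurable_const.sub (Real.measurable_exp.comp measurable_id.neg))
  have hGnn : ∀ v ∈ Ioi (0:ℝ), 0 ≤ G v := by
    intro v hv
    obtain ⟨hIφ, heq⟩ := hpointwise v hv
    have hv0 : (0:ℝ) < v := hv
    rw [hG]
    simp only
    rw [heq]
    exact mul_nonneg (Real.rpow_nonneg hv0.le _)
      (integral_nonneg fun ω => aux_phi_nonneg v hv0.le (ξ ω))
  have hGnn_ae : 0 ≤ᵐ[volume.restrict (Ioi (0:ℝ))] G :=
    (ae_restrict_mem measurableSet_Ioi).mono hGnn
  -- chain: LHS ↔ lintegral finite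
  have hiff1 : IntegrableOn G (Ioi (0:ℝ)) volume ↔
      (∫⁻ ω, auxH δ (ξ ω) ∂μ) < ∞ := by
    have hlin : (∫⁻ v in Ioi (0:ℝ), ENNReal.ofReal (G v)) = ∫⁻ ω, auxH δ (ξ ω) ∂μ := by
      rw [← hswap]
      exact setLIntegral_congr_fun measurableSet_Ioi (fun v hv => hae v hv)
    constructor
    · intro h
      rw [← hlin]
      exact (hasFiniteIntegral_iff_ofReal hGnn_ae).mp h.hasFiniteIntegral
    · intro h
      exact ⟨hGmeas.aestronglyMeasurable.restrict,
        (hasFiniteIntegral_iff_ofReal hGnn_ae).mpr (hlin ▸ h)⟩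
  -- RHS ↔ lintegral finite
  have hmeasR : Measurable fun ω => (ξ ω:ℝ) ^ (1+δ) := by
    exact (by measurability : Measurable fun x : ℝ => x ^ (1+δ)).comp hcast
  have hRnn : 0 ≤ᵐ[μ] fun ω => (ξ ω:ℝ) ^ (1+δ) :=
    Filter.Eventually.of_forall fun ω => Real.rpow_nonneg (Nat.cast_nonneg _) _
  have hiff2 : Integrable (fun ω => (ξ ω:ℝ) ^ (1+δ)) μ ↔
      (∫⁻ ω, ENNReal.ofReal ((ξ ω:ℝ) ^ (1+δ)) ∂μ) < ∞ := by
    constructor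
    · intro h
      exact (hasFiniteIntegral_iff_ofReal hRnn).mp h.hasFiniteIntegral
    · intro h
      exact ⟨hmeasR.aestronglyMeasurable, (hasFiniteIntegral_iff_ofReal hRnn).mpr h⟩
  -- core equivalence of the two lintegrals' finiteness
  have hcore : (∫⁻ ω, auxH δ (ξ ω) ∂μ) < ∞ ↔
      (∫⁻ ω, ENNReal.ofReal ((ξ ω:ℝ) ^ (1+δ)) ∂μ) < ∞ := by
    constructor
    · intro h
      have hpt : ∀ ω, ENNReal.ofReal ((ξ ω:ℝ) ^ (1+δ)) ≤
          ENNReal.ofReal ((5:ℝ) ^ (2+δ)) * auxH δ (ξ ω) + 25 := by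
        intro ω
        rcases le_or_gt 5 (ξ ω) with h5 | h5
        · have hl := auxH_lower ⟨hδ0, hδ1⟩ (ξ ω) h5
          have h5pos : (0:ℝ) < 5 ^ (2+δ) := Real.rpow_pos_of_pos (by norm_num) _
          have : ENNReal.ofReal ((ξ ω:ℝ) ^ (1+δ)) =
              ENNReal.ofReal ((5:ℝ) ^ (2+δ)) *
                ENNReal.ofReal ((ξ ω:ℝ) ^ (1+δ) / 5 ^ (2+δ)) := by
            rw [← ENNReal.ofReal_mul h5pos.le]
            congr 1
            field_simp
          rw [this]
          exact le_add_right (mul_le_mul_right hl _)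
        · have hb : ((ξ ω:ℝ)) ^ (1+δ) ≤ 25 := by
            rcases Nat.eq_zero_or_pos (ξ ω) with h0 | h1
            · rw [h0]
              push_cast
              rw [Real.zero_rpow (by linarith)]
              norm_num
            · have h1' : (1:ℝ) ≤ (ξ ω:ℝ) := by exact_mod_cast h1
              have h4 : ((ξ ω:ℝ)) ≤ 4 := by
                have : ξ ω ≤ 4 := by omega
                exact_mod_cast this
              have step : ((ξ ω:ℝ)) ^ (1+δ) ≤ ((ξ ω:ℝ)) ^ ((2:ℕ):ℝ) :=
                Real.rpow_le_rpow_of_exponent_le h1' (by push_cast; linarith)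
              rw [Real.rpow_natCast] at step
              nlinarith
          calc ENNReal.ofReal ((ξ ω:ℝ) ^ (1+δ)) ≤ ENNReal.ofReal 25 :=
              ENNReal.ofReal_le_ofReal hb
          _ = 25 := by norm_num
          _ ≤ _ := le_add_self
      calc (∫⁻ ω, ENNReal.ofReal ((ξ ω:ℝ) ^ (1+δ)) ∂μ)
          ≤ ∫⁻ ω, (ENNReal.ofReal ((5:ℝ) ^ (2+δ)) * auxH δ (ξ ω) + 25) ∂μ :=
            lintegral_mono hpt
      _ = ENNReal.ofReal ((5:ℝ) ^ (2+δ)) * (∫⁻ ω, auxH δ (ξ ω) ∂μ) + 25 * μ univ := by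
            rw [lintegral_add_right _ measurable_const,
              lintegral_const_mul' _ _ ENNReal.ofReal_ne_top, lintegral_const]
      _ < ∞ := by
            rw [measure_univ]
            exact ENNReal.add_lt_top.mpr
              ⟨ENNReal.mul_lt_top ENNReal.ofReal_lt_top h, by norm_num⟩
    · intro h
      have hCnn : (0:ℝ) ≤ 1/(1-δ) + 1/δ := by
        have : (0:ℝ) < 1 - δ := by linarith
        positivity
      calc (∫⁻ ω, auxH δ (ξ ω) ∂μ)
          ≤ ∫⁻ ω, ENNReal.ofReal (1/(1-δ) + 1/δ) *
              ENNReal.ofReal ((ξ ω:ℝ) ^ (1+δ)) ∂μ := by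
            apply lintegral_mono fun ω => ?_
            have := auxH_upper ⟨hδ0, hδ1⟩ (ξ ω)
            rwa [ENNReal.ofReal_mul hCnn] at this
      _ = ENNReal.ofReal (1/(1-δ) + 1/δ) *
              ∫⁻ ω, ENNReal.ofReal ((ξ ω:ℝ) ^ (1+δ)) ∂μ :=
            lintegral_const_mul' _ _ ENNReal.ofReal_ne_top
      _ < ∞ := ENNReal.mul_lt_top ENNReal.ofReal_lt_top h
  exact hiff1.trans (hcore.trans hiff2.symm)
end
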